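/- arXiv:2601.22200 — 2 statements merged into one kernel-verified Lean document; each statement's English description precedes it below -/
import Mathlib

section
/- Greville rank-increasing update: let R ∈ ℝ^{m×n}, z ∈ ℝ^n, and suppose c = (I − R†R) z ≠ 0. Then the Moore–Penrose pseudoinverse of the row-augmented matrix [R; zᵀ] is the block matrix [R† − c‡ zᵀR† , c‡] where c‡ = c/‖c‖² (viewed as an n×1 column appended on the right of the n×m block). -/
open Matrix

/-- The four Penrose conditions: `B` is the Moore–Penrose pseudoinverse of `A`. -/
def IsMoorePenrose {m n : Type*} [Fintype m] [Fintype n]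
    (A : Matrix m n ℝ) (B : Matrix n m ℝ) : Prop :=
  A * B * A = A ∧ B * A * B = B ∧ (A * B)ᵀ = A * B ∧ (B * A)ᵀ = B * A

/-- Greville rank-increasing update: if `c = (I − R†R)z ≠ 0`, then the pseudoinverse of
the row-augmented matrix `[R; zᵀ]` is the block matrix `[R† − c‡ zᵀR† , c‡]` where
`c‡ = c/‖c‖²`. -/
theorem greville_rank_increasing {m n : ℕ}
    (R : Matrix (Fin m) (Fin n) ℝ) (Rp : Matrix (Fin n) (Fin m) ℝ)
    (hR : IsMoorePenrose R Rp) (z : Fin n → ℝ)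
    (c : Fin n → ℝ) (hc : c = z - (Rp * R).mulVec z) (hc0 : c ≠ 0) :
    IsMoorePenrose
      (fromRows R (Matrix.of fun _ : Fin 1 => z))
      (fromCols
        (Rp - vecMulVec ((∑ i, c i ^ 2)⁻¹ • c) (vecMul z Rp))
        (Matrix.of fun i (_ : Fin 1) => (∑ i, c i ^ 2)⁻¹ * c i)) := by
  obtain ⟨h1, h2, h3, h4⟩ := hR
  set s : ℝ := ∑ i, c i ^ 2 with hs
  have hsne : s ≠ 0 := by
    obtain ⟨i, hi⟩ := Function.ne_iff.mp hc0
    have : 0 < s := Finset.sum_pos' (fun j _ => sq_nonneg _)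
      ⟨i, Finset.mem_univ i, lt_of_le_of_ne (sq_nonneg _) (Ne.symm (pow_ne_zero 2 hi))⟩
    exact ne_of_gt this
  -- matrix abbreviations
  set Z : Matrix (Fin 1) (Fin n) ℝ := Matrix.replicateRow (Fin 1) z with hZdef
  set Cc : Matrix (Fin n) (Fin 1) ℝ := Matrix.replicateCol (Fin 1) c with hCcdef
  set Cr : Matrix (Fin 1) (Fin n) ℝ := Matrix.replicateRow (Fin 1) c with hCrdef
  set B1 : Matrix (Fin n) (Fin m) ℝ := Rp - s⁻¹ • (Cc * (Z * Rp)) with hB1def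
  set B2 : Matrix (Fin n) (Fin 1) ℝ := s⁻¹ • Cc with hB2def
  -- identify the stated blocks with our abbreviations
  have hArow : (Matrix.of fun _ : Fin 1 => z) = Z := rfl
  have hblock1 : Rp - vecMulVec (s⁻¹ • c) (vecMul z Rp) = B1 := by
    rw [hB1def, vecMulVec_eq (Fin 1), Matrix.replicateCol_smul, Matrix.replicateRow_vecMul,
      Matrix.smul_mul, hZdef, hCcdef]
    rfl
  have hblock2 : (Matrix.of fun i (_ : Fin 1) => s⁻¹ * c i) = B2 := by
    ext i j
    simp [hB2def, hCcdef, Matrix.replicateCol]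
  rw [hArow, hblock1, hblock2]
  -- key vector facts
  have hRc : R *ᵥ c = 0 := by
    have hRR : R * (Rp * R) = R := by rw [← Matrix.mul_assoc, h1]
    rw [hc, Matrix.mulVec_sub, Matrix.mulVec_mulVec, hRR, sub_self]
  have hcRp : c ᵥ* Rp = 0 := by
    rw [hc, Matrix.sub_vecMul, ← h4, Matrix.mulVec_transpose,
      Matrix.vecMul_vecMul, h2, sub_self]
  -- matrix forms of the key facts
  have hRC : R * Cc = 0 := by
    rw [hCcdef, ← Matrix.replicateCol_mulVec, hRc]
    ext i j; simp [Matrix.replicateCol]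
  have hCr : Cr = Z - Z * (Rp * R) := by
    rw [hCrdef, hZdef, hc]
    have hmv : (Rp * R) *ᵥ z = z ᵥ* (Rp * R) := by
      rw [← h4, Matrix.mulVec_transpose, h4]
    rw [hmv, ← Matrix.replicateRow_vecMul]
    ext i j
    simp [Matrix.replicateRow]
  have hzc : z ⬝ᵥ c = s := by
    have hcc : c ⬝ᵥ c = s := by simp [dotProduct, hs, sq]
    have hz : z = c + (Rp * R) *ᵥ z := by rw [hc]; ring
    have hperp : ((Rp * R) *ᵥ z) ⬝ᵥ c = 0 := by
      rw [dotProduct_comm, dotProduct_mulVec, ← Matrix.vecMul_vecMul, hcRp]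
      simp
    calc z ⬝ᵥ c = (c + (Rp * R) *ᵥ z) ⬝ᵥ c := by rw [← hz]
      _ = c ⬝ᵥ c + ((Rp * R) *ᵥ z) ⬝ᵥ c := add_dotProduct _ _ _
      _ = s := by rw [hcc, hperp, add_zero]
  have hZC : Z * Cc = s • (1 : Matrix (Fin 1) (Fin 1) ℝ) := by
    rw [hZdef, hCcdef, Matrix.replicateRow_mul_replicateCol, hzc]
    ext i j
    simp [Matrix.one_apply, Subsingleton.elim i j]
  -- the blocks of A * B
  have e11 : R * B1 = R * Rp := by
    rw [hB1def, Matrix.mul_sub, Matrix.mul_smul, ← Matrix.mul_assoc, hRC,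
      Matrix.zero_mul, smul_zero, sub_zero]
  have e12 : R * B2 = 0 := by rw [hB2def, Matrix.mul_smul, hRC, smul_zero]
  have e21 : Z * B1 = 0 := by
    rw [hB1def, Matrix.mul_sub, Matrix.mul_smul, ← Matrix.mul_assoc, hZC,
      Matrix.smul_mul, Matrix.one_mul, smul_smul, inv_mul_cancel₀ hsne, one_smul,
      sub_self]
  have e22 : Z * B2 = 1 := by
    rw [hB2def, Matrix.mul_smul, hZC, smul_smul, inv_mul_cancel₀ hsne, one_smul]
  have hAB : fromRows R Z * fromCols B1 B2 = fromBlocks (R * Rp) 0 0 1 := by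
    rw [fromRows_mul_fromCols, e11, e12, e21, e22]
  -- the product B * A
  have hBA : fromCols B1 B2 * fromRows R Z = Rp * R + s⁻¹ • (Cc * Cr) := by
    rw [fromCols_mul_fromRows, hB1def, hB2def, Matrix.sub_mul,
      Matrix.smul_mul, Matrix.smul_mul, Matrix.mul_assoc Cc (Z * Rp) R,
      Matrix.mul_assoc Z Rp R, sub_add_eq_add_sub, add_sub_assoc, ← smul_sub,
      ← Matrix.mul_sub, ← hCr]
  have hB1RRp : B1 * (R * Rp) = B1 := by
    have h2' : Rp * (R * Rp) = Rp := by rw [← Matrix.mul_assoc, h2]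
    rw [hB1def, Matrix.sub_mul, Matrix.smul_mul,
      Matrix.mul_assoc Cc (Z * Rp) (R * Rp), Matrix.mul_assoc Z Rp (R * Rp), h2']
  refine ⟨?_, ?_, ?_, ?_⟩
  · rw [hAB, fromBlocks_mul_fromRows]
    simp [h1]
  · rw [Matrix.mul_assoc, hAB, ← fromCols_fromRows_eq_fromBlocks,
      mul_fromCols, fromCols_mul_fromRows, fromCols_mul_fromRows,
      Matrix.mul_zero, Matrix.mul_zero, add_zero, zero_add, Matrix.mul_one, hB1RRp]
  · rw [hAB, fromBlocks_transpose]
    simp [h3]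
  · rw [hBA, transpose_add, transpose_smul, h4, Matrix.transpose_mul,
      hCrdef, hCcdef, Matrix.transpose_replicateRow, Matrix.transpose_replicateCol]
end

section
/- Greville rank-preserving update: let R ∈ ℝ^{m×n}, z ∈ ℝ^n with z in the row space of R, i.e. (I − R†R)z = 0. Set h = zᵀR† ∈ ℝ^{1×m} and b = R†hᵀ/(1 + hhᵀ). Then the pseudoinverse of [R; zᵀ] equals [R† − b h , b]. -/
open Matrix

section aux

variable {k l p : Type*} [Fintype k] [Fintype l] [Fintype p]

lemma aux_vecMulVec_mul (b : k → ℝ) (h : l → ℝ) (M : Matrix l p ℝ) :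
    vecMulVec b h * M = vecMulVec b (vecMul h M) := by
  ext i j
  simp [mul_apply, vecMulVec_apply, vecMul, dotProduct, Finset.mul_sum, mul_assoc]

lemma aux_mul_vecMulVec (M : Matrix k l ℝ) (b : l → ℝ) (h : p → ℝ) :
    M * vecMulVec b h = vecMulVec (M *ᵥ b) h := by
  ext i j
  simp [mul_apply, vecMulVec_apply, mulVec, dotProduct, Finset.sum_mul, mul_assoc]

lemma aux_mul_col (M : Matrix k l ℝ) (v : l → ℝ) :
    M * (Matrix.of fun i (_ : Fin 1) => v i) = Matrix.of fun i (_ : Fin 1) => (M *ᵥ v) i := by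
  ext i j
  simp [mul_apply, mulVec, dotProduct]

lemma aux_row_mul (v : k → ℝ) (M : Matrix k l ℝ) :
    (Matrix.of fun (_ : Fin 1) => v) * M = Matrix.of fun (_ : Fin 1) => vecMul v M := by
  ext i j
  simp [mul_apply, vecMul, dotProduct]

lemma aux_col_mul_row (b : k → ℝ) (z : l → ℝ) :
    (Matrix.of fun i (_ : Fin 1) => b i) * (Matrix.of fun (_ : Fin 1) => z) = vecMulVec b z := by
  ext i j
  simp [mul_apply, vecMulVec_apply]

lemma aux_vecMul_vecMulVec (z b : k → ℝ) (h : l → ℝ) :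
    vecMul z (vecMulVec b h) = (z ⬝ᵥ b) • h := by
  ext j
  simp [vecMul, vecMulVec_apply, dotProduct, Finset.sum_mul, mul_assoc]

lemma aux_vecMulVec_smul (c : ℝ) (h : k → ℝ) (v : l → ℝ) :
    vecMulVec (c • h) v = c • vecMulVec h v := by
  ext i j
  simp [vecMulVec_apply, mul_assoc]

lemma aux_vecMulVec_transpose (h : k → ℝ) (v : l → ℝ) :
    (vecMulVec h v)ᵀ = vecMulVec v h := by
  ext i j
  simp [vecMulVec_apply, mul_comm]

end aux

/-- Greville rank-preserving update: if `z` lies in the row space of `R`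
(`(I − R†R)z = 0`), set `h = zᵀR†` and `b = R†hᵀ/(1 + hhᵀ)`.  Then the pseudoinverse
of the row-augmented matrix `[R; zᵀ]` equals `[R† − b h , b]`. -/
theorem greville_rank_preserving {m n : ℕ}
    (R : Matrix (Fin m) (Fin n) ℝ) (Rp : Matrix (Fin n) (Fin m) ℝ)
    (hR : IsMoorePenrose R Rp) (z : Fin n → ℝ)
    (hz : (Rp * R).mulVec z = z)
    (h : Fin m → ℝ) (hh : h = vecMul z Rp)
    (b : Fin n → ℝ) (hb : b = (1 + h ⬝ᵥ h)⁻¹ • Rp.mulVec h) :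
    IsMoorePenrose
      (fromRows R (Matrix.of fun _ : Fin 1 => z))
      (fromCols (Rp - vecMulVec b h) (Matrix.of fun i (_ : Fin 1) => b i)) := by
  obtain ⟨h1, h2, h3, h4⟩ := hR
  set c : ℝ := (1 + h ⬝ᵥ h)⁻¹ with hc
  have hsnn : 0 ≤ h ⬝ᵥ h := Finset.sum_nonneg fun i _ => mul_self_nonneg _
  have hspos : (0:ℝ) < 1 + h ⬝ᵥ h := by linarith
  have hsne : (1 + h ⬝ᵥ h) ≠ 0 := ne_of_gt hspos
  have hzv : vecMul z (Rp * R) = z := by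
    rw [← h4, vecMul_transpose, hz]
  have f1 : vecMul h R = z := by
    rw [hh, vecMul_vecMul, hzv]
  have hh' : h = Rpᵀ *ᵥ z := by rw [hh, mulVec_transpose]
  have key : R * Rp * Rpᵀ = Rpᵀ := by
    conv_lhs => rw [← h3]
    rw [← transpose_mul, ← Matrix.mul_assoc, h2]
  have f2 : (R * Rp) *ᵥ h = h := by
    rw [hh', mulVec_mulVec, key]
  have f3 : R *ᵥ b = c • h := by
    rw [hb, mulVec_smul, mulVec_mulVec, f2]
  have f4 : z ⬝ᵥ b = c * (h ⬝ᵥ h) := by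
    rw [hb, dotProduct_smul, smul_eq_mul, dotProduct_mulVec, ← hh]
  have f5 : (Rp * R) *ᵥ b = b := by
    rw [hb, mulVec_smul, mulVec_mulVec, h2]
  have hcs : 1 - c * (h ⬝ᵥ h) = c := by
    have hci : c * (1 + h ⬝ᵥ h) = 1 := by rw [hc]; exact inv_mul_cancel₀ hsne
    linear_combination -hci
  have f6 : vecMul z (Rp - vecMulVec b h) = c • h := by
    rw [sub_eq_add_neg, vecMul_add, vecMul_neg, aux_vecMul_vecMulVec, ← hh, f4]
    ext j
    simp only [Pi.add_apply, Pi.neg_apply, Pi.smul_apply, smul_eq_mul]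
    linear_combination h j * hcs
  have BA : fromCols (Rp - vecMulVec b h) (Matrix.of fun i (_ : Fin 1) => b i) *
      fromRows R (Matrix.of fun _ : Fin 1 => z) = Rp * R := by
    rw [fromCols_mul_fromRows, aux_col_mul_row, Matrix.sub_mul, aux_vecMulVec_mul, f1]
    abel
  have e11 : R * (Rp - vecMulVec b h) = R * Rp - c • vecMulVec h h := by
    rw [Matrix.mul_sub, aux_mul_vecMulVec, f3, aux_vecMulVec_smul]
  have e12 : R * (Matrix.of fun i (_ : Fin 1) => b i) =
      Matrix.of fun i (_ : Fin 1) => (c • h) i := by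
    rw [aux_mul_col, f3]
  have e21 : (Matrix.of fun (_ : Fin 1) => z) * (Rp - vecMulVec b h) =
      Matrix.of fun (_ : Fin 1) => c • h := by
    rw [aux_row_mul, f6]
  have e22 : (Matrix.of fun (_ : Fin 1) => z) * (Matrix.of fun i (_ : Fin 1) => b i) =
      Matrix.of fun (_ : Fin 1) (_ : Fin 1) => c * (h ⬝ᵥ h) := by
    ext i j
    simpa [mul_apply, dotProduct] using f4
  have AB : fromRows R (Matrix.of fun _ : Fin 1 => z) *
      fromCols (Rp - vecMulVec b h) (Matrix.of fun i (_ : Fin 1) => b i) =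
      fromBlocks (R * Rp - c • vecMulVec h h)
        (Matrix.of fun i (_ : Fin 1) => (c • h) i)
        (Matrix.of fun (_ : Fin 1) => c • h)
        (Matrix.of fun (_ : Fin 1) (_ : Fin 1) => c * (h ⬝ᵥ h)) := by
    rw [fromRows_mul_fromCols, e11, e12, e21, e22]
  refine ⟨?_, ?_, ?_, ?_⟩
  · rw [Matrix.mul_assoc, BA, fromRows_mul, ← Matrix.mul_assoc, h1, aux_row_mul]
    simp only [hzv]
  · rw [BA, mul_fromCols, Matrix.mul_sub, h2, aux_mul_vecMulVec, f5, aux_mul_col]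
    simp only [f5]
  · have t1 : (R * Rp - c • vecMulVec h h)ᵀ = R * Rp - c • vecMulVec h h := by
      rw [transpose_sub, h3, transpose_smul, aux_vecMulVec_transpose]
    have t2 : (Matrix.of fun (_ : Fin 1) => c • h)ᵀ =
        Matrix.of fun i (_ : Fin 1) => (c • h) i := by
      ext i j; rfl
    have t3 : (Matrix.of fun i (_ : Fin 1) => (c • h) i)ᵀ =
        Matrix.of fun (_ : Fin 1) => c • h := by
      ext i j; rfl
    have t4 : (Matrix.of fun (_ : Fin 1) (_ : Fin 1) => c * (h ⬝ᵥ h))ᵀ =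
        Matrix.of fun (_ : Fin 1) (_ : Fin 1) => c * (h ⬝ᵥ h) := by
      ext i j; rfl
    rw [AB, fromBlocks_transpose, t1, t2, t3, t4]
  · rw [BA]
    exact h4
end
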